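/- For polynomials a, b, c ∈ Q[T] with a = bc and b, c nonzero nonconstant, the element √(a² + c) of Q((1/T)) has the periodic continued fraction expansion [a; 2b, 2a, 2b, 2a, ...] (period 2b, 2a). In particular √(a² + 1) = [a; 2a, 2a, ...]. -/

import Mathlib

noncomputable section
open scoped Classical

/-- `ℚ((1/T))`: formal Laurent series in `X = 1/T` over `ℚ`. The exponent `n` of `X`
corresponds to `T^(-n)`. -/
abbrev QLaurent := LaurentSeries ℚ

/-- The embedding of `ℚ[T]` into `ℚ((1/T))`, sending `T` to `X⁻¹ = single (-1) 1`. -/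
noncomputable def polyToL : Polynomial ℚ →ₐ[ℚ] QLaurent :=
  Polynomial.aeval (HahnSeries.single (-1 : ℤ) (1 : ℚ))

/-- The embedding of the rational functions `ℚ(T)` into `ℚ((1/T))`. -/
noncomputable def ratToL (r : RatFunc ℚ) : QLaurent := polyToL r.num / polyToL r.denom

/-- The degree (in `T`) of a formal Laurent series in `1/T`, with `deg 0 = ⊥`. -/
noncomputable def degL (α : QLaurent) : WithBot ℤ :=
  if α = 0 then ⊥ else ((-α.order : ℤ) : WithBot ℤ)

/-- Integer-valued degree in `T` (junk value `0` at `α = 0`). -/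
noncomputable def degZ (α : QLaurent) : ℤ := -α.order

/-- The polynomial part `⌊α⌋` of `α ∈ ℚ((1/T))`: truncation to the terms of
nonnegative degree in `T` (nonpositive exponent of `X = 1/T`). -/
noncomputable def polyPart (α : QLaurent) : QLaurent where
  coeff n := if n ≤ 0 then α.coeff n else 0
  isPWO_support' := α.isPWO_support'.mono (by
    intro n hn
    simp only [Function.mem_support, ne_eq] at hn ⊢
    intro h
    apply hn
    split_ifs <;> simp [h])

/-- The fractional part `{α} = α - ⌊α⌋`. -/
noncomputable def fracPart (α : QLaurent) : QLaurent := α - polyPart α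

/-- The complete quotients `α_n` of the continued fraction algorithm:
`α_0 = α`, `α_{n+1} = 1/{α_n}`. -/
noncomputable def cfA (α : QLaurent) : ℕ → QLaurent
  | 0 => α
  | n + 1 => (fracPart (cfA α n))⁻¹

/-- The partial quotients `a_n = ⌊α_n⌋` of the continued fraction of `α`. -/
noncomputable def pq (α : QLaurent) (n : ℕ) : QLaurent := polyPart (cfA α n)

lemma polyToL_coeff (p : Polynomial ℚ) (n : ℤ) :
    (polyToL p).coeff n = if n ≤ 0 then p.coeff (-n).toNat else 0 := by
  induction p using Polynomial.induction_on' with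
  | add p q hp hq =>
    simp only [map_add, HahnSeries.coeff_add, hp, hq, Polynomial.coeff_add]
    split_ifs <;> simp
  | monomial k r =>
    have hC : (algebraMap ℚ QLaurent) r = HahnSeries.single (0:ℤ) r := by
      rw [show (algebraMap ℚ QLaurent) r = HahnSeries.C r from
        DFunLike.congr_fun (Subsingleton.elim ((algebraMap ℚ QLaurent) : ℚ →+* QLaurent)
          (HahnSeries.C : ℚ →+* HahnSeries ℤ ℚ)) r, HahnSeries.C_apply]
    rw [← Polynomial.C_mul_X_pow_eq_monomial, map_mul, map_pow, polyToL,
      Polynomial.aeval_X, Polynomial.aeval_C, HahnSeries.single_pow, hC,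
      HahnSeries.single_mul_single, HahnSeries.coeff_single]
    simp only [Polynomial.coeff_C_mul, Polynomial.coeff_X_pow]
    by_cases h : n = (0:ℤ) + (k:ℕ) • (-1:ℤ)
    · rw [if_pos h, if_pos (by simp at h; omega), if_pos (by simp at h ⊢; omega), one_pow, mul_one]
    · rw [if_neg h]
      by_cases h1 : n ≤ 0
      · rw [if_pos h1, if_neg (by simp at h ⊢; omega), mul_zero]
      · rw [if_neg h1]

lemma polyToL_coeff_nat (p : Polynomial ℚ) (k : ℕ) :
    (polyToL p).coeff (-(k:ℤ)) = p.coeff k := by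
  rw [polyToL_coeff, if_pos (by omega)]
  congr 1
  omega

lemma polyToL_coeff_pos (p : Polynomial ℚ) {n : ℤ} (hn : 0 < n) :
    (polyToL p).coeff n = 0 := by
  rw [polyToL_coeff, if_neg (by omega)]

lemma polyToL_ne_zero {p : Polynomial ℚ} (hp : p ≠ 0) : polyToL p ≠ 0 := by
  intro h
  apply Polynomial.leadingCoeff_ne_zero.mpr hp
  have h2 := polyToL_coeff_nat p p.natDegree
  rw [h, HahnSeries.coeff_zero] at h2
  rw [Polynomial.leadingCoeff, ← h2]

lemma order_eq_of' {x : QLaurent} {d : ℤ} (h1 : x.coeff d ≠ 0)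
    (h2 : ∀ n, n < d → x.coeff n = 0) : x.order = d := by
  refine le_antisymm (HahnSeries.order_le_of_coeff_ne_zero h1) ?_
  by_contra h
  push_neg at h
  exact HahnSeries.ne_zero_of_coeff_ne_zero h1 (HahnSeries.coeff_order_eq_zero.mp (h2 _ h))

lemma polyToL_order {p : Polynomial ℚ} (hp : p ≠ 0) :
    (polyToL p).order = -(p.natDegree : ℤ) := by
  apply order_eq_of'
  · rw [polyToL_coeff_nat]
    exact Polynomial.leadingCoeff_ne_zero.mpr hp
  · intro n hn
    rw [polyToL_coeff, if_pos (by omega)]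
    exact Polynomial.coeff_eq_zero_of_natDegree_lt (by omega)


lemma polyPart_coeff (α : QLaurent) (n : ℤ) :
    (polyPart α).coeff n = if n ≤ 0 then α.coeff n else 0 := rfl

lemma polyPart_poly_add (p : Polynomial ℚ) {β : QLaurent} (hβ : 0 < β.order) :
    polyPart (polyToL p + β) = polyToL p := by
  ext n
  rw [polyPart_coeff]
  split_ifs with h
  · rw [HahnSeries.coeff_add, HahnSeries.coeff_eq_zero_of_lt_order (lt_of_le_of_lt h hβ),
      add_zero]
  · exact (polyToL_coeff_pos p (by omega)).symm

lemma fracPart_poly_add (p : Polynomial ℚ) {β : QLaurent} (hβ : 0 < β.order) :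
    fracPart (polyToL p + β) = β := by
  rw [fracPart, polyPart_poly_add p hβ, add_sub_cancel_left]

/-- For `a, b, c ∈ ℚ[T]` with `a = b c` and `b, c` nonzero and nonconstant, the
square root `α` of `a² + c` in `ℚ((1/T))` (the one whose leading term agrees with
that of `a`) has the periodic continued fraction expansion
`[a; 2b, 2a, 2b, 2a, …]`. -/
theorem sqrt_cf_periodic (a b c : Polynomial ℚ) (hb : b ≠ 0) (hc : c ≠ 0)
    (hbd : 1 ≤ b.natDegree) (hcd : 1 ≤ c.natDegree) (habc : a = b * c)
    (α : QLaurent) (hsq : α ^ 2 = polyToL (a ^ 2 + c))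
    (hlead : α.coeff (-(a.natDegree : ℤ)) = a.leadingCoeff) :
    pq α 0 = polyToL a ∧
    ∀ n : ℕ, pq α (2 * n + 1) = polyToL (2 * b) ∧ pq α (2 * n + 2) = polyToL (2 * a) := by
  have ha0 : a ≠ 0 := by rw [habc]; exact mul_ne_zero hb hc
  have hlc : a.leadingCoeff ≠ 0 := Polynomial.leadingCoeff_ne_zero.mpr ha0
  have hda : a.natDegree = b.natDegree + c.natDegree := by
    rw [habc]; exact Polynomial.natDegree_mul hb hc
  set d := a.natDegree with hd
  set A := polyToL a with hA
  set B := polyToL b with hB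
  set C := polyToL c with hC
  have hC0 : C ≠ 0 := polyToL_ne_zero hc
  have hCord : C.order = -(c.natDegree : ℤ) := polyToL_order hc
  have hAord : A.order = -(d : ℤ) := polyToL_order ha0
  have hd2 : (a ^ 2).natDegree = 2 * d := by rw [Polynomial.natDegree_pow]
  have hco : (a ^ 2 + c).coeff (2 * d) = a.leadingCoeff ^ 2 := by
    rw [Polynomial.coeff_add, Polynomial.coeff_eq_zero_of_natDegree_lt (p := c)
      (show c.natDegree < 2 * d by omega), add_zero,
      ← hd2, Polynomial.coeff_natDegree, Polynomial.leadingCoeff_pow]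
  have hordsum : (polyToL (a ^ 2 + c)).order = -(2 * d : ℤ) := by
    apply order_eq_of'
    · rw [show (-(2 * d : ℤ)) = -((2 * d : ℕ) : ℤ) by push_cast; ring, polyToL_coeff_nat, hco]
      exact pow_ne_zero 2 hlc
    · intro n hn
      rw [polyToL_coeff, if_pos (by omega)]
      apply Polynomial.coeff_eq_zero_of_natDegree_lt
      have h1 : (a ^ 2 + c).natDegree ≤ 2 * d :=
        le_trans (Polynomial.natDegree_add_le _ _) (by simp [hd2]; omega)
      omega
  have hpoly0 : a ^ 2 + c ≠ 0 := by
    intro h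
    rw [h, Polynomial.coeff_zero] at hco
    exact pow_ne_zero 2 hlc hco.symm
  have hα0 : α ≠ 0 := by
    intro h
    rw [h, zero_pow (two_ne_zero)] at hsq
    exact polyToL_ne_zero hpoly0 hsq.symm
  have hαord : α.order = -(d : ℤ) := by
    have h1 : (α * α).order = α.order + α.order := HahnSeries.order_mul hα0 hα0
    rw [← pow_two, hsq, hordsum] at h1
    omega
  have haddcoeff : (α + A).coeff (-(d : ℤ)) = 2 * a.leadingCoeff := by
    rw [HahnSeries.coeff_add, hlead, hA, hd, polyToL_coeff_nat, Polynomial.coeff_natDegree]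
    ring
  have haddord : (α + A).order = -(d : ℤ) := by
    apply order_eq_of'
    · rw [haddcoeff]
      exact mul_ne_zero two_ne_zero hlc
    · intro n hn
      rw [HahnSeries.coeff_add,
        HahnSeries.coeff_eq_zero_of_lt_order (by rw [hαord]; exact hn),
        HahnSeries.coeff_eq_zero_of_lt_order (by rw [hAord]; exact hn), add_zero]
  have hadd0 : α + A ≠ 0 :=
    HahnSeries.ne_zero_of_coeff_ne_zero (haddcoeff ▸ mul_ne_zero two_ne_zero hlc)
  have hE : (α - A) * (α + A) = C := by
    have h1 : polyToL (a ^ 2 + c) = A ^ 2 + C := by rw [map_add, map_pow, hA, hC]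
    linear_combination hsq + h1
  have hsub0 : α - A ≠ 0 := by
    intro h
    exact hC0 (by rw [← hE, h, zero_mul])
  have hsubord : (α - A).order = (b.natDegree : ℤ) := by
    have h1 := HahnSeries.order_mul hsub0 hadd0
    rw [hE, hCord, haddord] at h1
    omega
  set γ := (α - A) * C⁻¹ with hγ
  have hγ0 : γ ≠ 0 := mul_ne_zero hsub0 (inv_ne_zero hC0)
  have hγC : γ * C = α - A := by
    rw [hγ, mul_assoc, inv_mul_cancel₀ hC0, mul_one]
  have hγord : γ.order = (d : ℤ) := by
    have h1 := HahnSeries.order_mul hγ0 hC0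
    rw [hγC, hsubord, hCord] at h1
    omega
  have hfrac_sub : 0 < (α - A).order := by rw [hsubord]; exact_mod_cast hbd
  have hfrac_γ : 0 < γ.order := by rw [hγord]; exact_mod_cast (by omega : 0 < d)
  have hpqα : polyPart α = A := by
    have h := polyPart_poly_add a (β := α - A) hfrac_sub
    rwa [show polyToL a + (α - A) = α by rw [← hA]; ring] at h
  have hfracα : fracPart α = α - A := by
    rw [fracPart, hpqα]
  have h2b : polyToL (2 * b) = 2 * B := by rw [map_mul, map_ofNat, hB]
  have h2a : polyToL (2 * a) = 2 * A := by rw [map_mul, map_ofNat, hA]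
  have hBC : B * C = A := by rw [hA, hB, hC, ← map_mul, ← habc]
  have hinv1 : (α - A)⁻¹ = polyToL (2 * b) + γ := by
    have h1 : (polyToL (2 * b) + γ) * (α - A) = 1 := by
      have h2 : ((polyToL (2 * b) + γ) * (α - A) - 1) * C = 0 := by
        rw [h2b]
        linear_combination (2 * (α - A)) * hBC + (α - A) * hγC + hE
      rcases mul_eq_zero.mp h2 with h3 | h3
      · exact sub_eq_zero.mp h3
      · exact absurd h3 hC0
    exact (eq_inv_of_mul_eq_one_left h1).symm
  have hinv2 : γ⁻¹ = polyToL (2 * a) + (α - A) := by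
    have h1 : (polyToL (2 * a) + (α - A)) * γ = 1 := by
      have h2 : ((polyToL (2 * a) + (α - A)) * γ - 1) * C = 0 := by
        rw [h2a]
        linear_combination (2 * A + (α - A)) * hγC + hE
      rcases mul_eq_zero.mp h2 with h3 | h3
      · exact sub_eq_zero.mp h3
      · exact absurd h3 hC0
    exact (eq_inv_of_mul_eq_one_left h1).symm
  have hstep2 : ∀ k : ℕ, cfA α k = polyToL (2 * b) + γ →
      cfA α (k + 1) = polyToL (2 * a) + (α - A) := by
    intro k hk
    show (fracPart (cfA α k))⁻¹ = _
    rw [hk, fracPart_poly_add _ hfrac_γ, hinv2]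
  have hstep1 : ∀ k : ℕ, cfA α k = polyToL (2 * a) + (α - A) →
      cfA α (k + 1) = polyToL (2 * b) + γ := by
    intro k hk
    show (fracPart (cfA α k))⁻¹ = _
    rw [hk, fracPart_poly_add _ hfrac_sub, hinv1]
  have hc1 : cfA α 1 = polyToL (2 * b) + γ := by
    show (fracPart (cfA α 0))⁻¹ = _
    rw [show cfA α 0 = α from rfl, hfracα, hinv1]
  have key : ∀ n : ℕ, cfA α (2 * n + 1) = polyToL (2 * b) + γ ∧
      cfA α (2 * n + 2) = polyToL (2 * a) + (α - A) := by
    intro n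
    induction n with
    | zero => exact ⟨hc1, hstep2 1 hc1⟩
    | succ n ih =>
      have e1 : 2 * (n + 1) + 1 = (2 * n + 2) + 1 := by ring
      have h1 : cfA α (2 * (n + 1) + 1) = polyToL (2 * b) + γ := by
        rw [e1]; exact hstep1 _ ih.2
      exact ⟨h1, hstep2 _ h1⟩
  refine ⟨?_, fun n => ?_⟩
  · rw [pq, show cfA α 0 = α from rfl, hpqα, hA]
  · constructor
    · rw [pq, (key n).1, polyPart_poly_add _ hfrac_γ]
    · rw [pq, (key n).2, polyPart_poly_add _ hfrac_sub]


end
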